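/- For integers n, i, j with i ≤ n-1 and any integer k, the sum over p ≥ j of (-1)^p · C(k - p, n-1) · C(n-1-i, p-j) equals (-1)^j · C(k - n + 1 - j + i, i). (Here C denotes the binomial coefficient, extended as a polynomial in its upper argument, and the sum is finite since C(n-1-i, p-j) vanishes for p > j + n - 1 - i.) -/

import Mathlib

open Finset

lemma pascal (x : ℤ) (m : ℕ) :
    Ring.choose x (m+1) - Ring.choose (x-1) (m+1) = Ring.choose (x-1) m := by
  have := Ring.choose_succ_succ (x - 1) m
  rw [sub_add_cancel] at this
  rw [this]; ring

lemma key (d m : ℕ) (hd : d ≤ m) (x : ℤ) :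
    ∑ q ∈ Finset.range (d+1), (-1:ℤ)^q * (d.choose q : ℤ) * Ring.choose (x - q) m
    = Ring.choose (x - d) (m - d) := by
  induction d generalizing x with
  | zero => simp
  | succ d ih =>
    have hd' : d ≤ m := le_of_lt hd
    set h : ℤ → ℕ → ℤ := fun y q => (-1:ℤ)^q * (d.choose q : ℤ) * Ring.choose (y - q) m with hh
    have step : ∑ q ∈ range (d+2), (-1:ℤ)^q * ((d+1).choose q : ℤ) * Ring.choose (x - q) m
        = (∑ q ∈ range (d+1), h x q) - (∑ q ∈ range (d+1), h (x-1) q) := by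
      rw [Finset.sum_range_succ' _ (d+1)]
      have key2 : ∀ q ∈ range (d+1),
          (-1:ℤ)^(q+1) * ((d+1).choose (q+1) : ℤ) * Ring.choose (x - (q+1 : ℕ)) m
          = h x (q+1) + (- h (x-1) q) := by
        intro q hq
        simp only [hh, Nat.choose_succ_succ, Nat.cast_add]
        push_cast
        rw [show x - ((q:ℤ)+1) = x - 1 - q by ring]
        ring
      rw [Finset.sum_congr rfl key2, Finset.sum_add_distrib]
      have : (∑ q ∈ range (d+1), h x (q+1)) + (-1:ℤ)^0 * ((d+1).choose 0 : ℤ) * Ring.choose (x - (0:ℕ)) m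
          = ∑ q ∈ range (d+2), h x q := by
        rw [Finset.sum_range_succ' (h x) (d+1)]
        simp [hh]
      rw [add_assoc, add_comm (∑ q ∈ range (d+1), -h (x-1) q), ← add_assoc, this,
        Finset.sum_range_succ (h x) (d+1)]
      simp [hh, Finset.sum_neg_distrib, sub_eq_add_neg]
    rw [step, ih hd', ih hd']
    have hm : m - d = (m - (d+1)) + 1 := by omega
    rw [hm]
    have := pascal (x - d) (m - (d+1))
    rw [show x - ((d:ℕ)+1 : ℕ) = x - (d:ℤ) - 1 by push_cast; ring,
      show x - 1 - (d:ℤ) = x - d - 1 by ring]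
    exact this

/-- Chu–Vandermonde type identity:
for integers `n, i, j` with `i ≤ n-1` and any integer `k`,
`∑_{p ≥ j} (-1)^p C(k-p, n-1) C(n-1-i, p-j) = (-1)^j C(k-n+1-j+i, i)`,
where `C` with integer upper argument is the polynomial binomial coefficient
(`Ring.choose` on `ℤ`).  The sum is finite, supported on `j ≤ p ≤ j + (n-1-i)`. -/
theorem stmt0 (n i j : ℕ) (hn : 1 ≤ n) (hi : i ≤ n - 1) (k : ℤ) :
    ∑ p ∈ Finset.Icc j (j + (n - 1 - i)),
      (-1 : ℤ) ^ p * Ring.choose (k - p) (n - 1) * (Nat.choose (n - 1 - i) (p - j) : ℤ)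
    = (-1 : ℤ) ^ j * Ring.choose (k - n + 1 - j + i) i := by
  set d := n - 1 - i with hd
  rw [show Finset.Icc j (j+d) = Finset.Ico j (j+d+1) by rw [Finset.Ico_add_one_right_eq_Icc], Finset.sum_Ico_eq_sum_range]
  have h1 : j + d + 1 - j = d + 1 := by omega
  rw [h1]
  have h2 : ∀ q ∈ Finset.range (d+1),
      (-1:ℤ)^(j+q) * Ring.choose (k - (j+q : ℕ)) (n-1) * ((Nat.choose d ((j+q)-j)) : ℤ)
      = (-1:ℤ)^j * ((-1:ℤ)^q * (d.choose q : ℤ) * Ring.choose ((k - j) - q) (n-1)) := by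
    intro q hq
    rw [Nat.add_sub_cancel_left, pow_add]
    push_cast
    rw [show k - ((j:ℤ) + q) = k - j - q by ring]
    ring
  rw [Finset.sum_congr rfl h2, ← Finset.mul_sum, key d (n-1) (by omega) (k - j)]
  congr 1
  · congr 1
    · push_cast [hd, Nat.cast_sub hi, Nat.cast_sub hn]
      omega
    · omega
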